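/- Let (E, μ) be a measure space and let f and h be strictly positive integrable measurable functions on E such that u = log(f/h) is essentially bounded with ‖u‖_∞ ≤ B. Then the Kullback–Leibler distance satisfies the lower bound Δ(f; h) ≥ (1/2)·e^{−B}·∫_E f·(log(f/h))² dμ. -/

import Mathlib

open MeasureTheory

open Real

lemma key_deriv (B : ℝ) (t : ℝ) :
    HasDerivAt (fun t => Real.exp (-t) - 1 + t - (1/2) * Real.exp (-B) * t^2)
      (1 - Real.exp (-t) - Real.exp (-B) * t) t := by
  have h1 : HasDerivAt (fun t : ℝ => Real.exp (-t)) (-Real.exp (-t)) t := by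
    simpa [Function.comp_def] using (Real.hasDerivAt_exp (-t)).comp t ((hasDerivAt_id t).neg)
  have h2 : HasDerivAt (fun t : ℝ => (1/2) * Real.exp (-B) * t^2)
      ((1/2) * Real.exp (-B) * (2 * t)) t := by
    simpa using ((hasDerivAt_pow 2 t).const_mul ((1/2) * Real.exp (-B)))
  have := ((h1.sub_const 1).add (hasDerivAt_id t)).sub h2
  exact this.congr_deriv (by ring)

lemma key_ineq {B u : ℝ} (hu : |u| ≤ B) :
    (1/2) * Real.exp (-B) * u^2 ≤ Real.exp (-u) - 1 + u := by
  have hB0 : 0 ≤ B := (abs_nonneg u).trans hu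
  set g : ℝ → ℝ := fun t => Real.exp (-t) - 1 + t - (1/2) * Real.exp (-B) * t^2 with hg
  have hg0 : g 0 = 0 := by simp [hg]
  have hcont : Continuous g := by
    fun_prop
  have hderiv : ∀ t, deriv g t = 1 - Real.exp (-t) - Real.exp (-B) * t :=
    fun t => (key_deriv B t).deriv
  have hdiff : Differentiable ℝ g := fun t => (key_deriv B t).differentiableAt
  have suff : 0 ≤ g u := by
    rcases le_or_gt 0 u with h0 | h0
    · have mono : MonotoneOn g (Set.Icc 0 B) := by
        apply monotoneOn_of_deriv_nonneg (convex_Icc 0 B) hcont.continuousOn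
          hdiff.differentiableOn
        intro t ht
        rw [interior_Icc] at ht
        rw [hderiv]
        have h1 := Real.add_one_le_exp t
        have h2 : Real.exp (-t) * Real.exp t = 1 := by
          rw [← Real.exp_add]; simp
        have h3 : Real.exp (-B) ≤ Real.exp (-t) := Real.exp_le_exp.2 (by linarith [ht.2])
        have h4 : (0:ℝ) < Real.exp (-t) := Real.exp_pos _
        have h5 : (0:ℝ) < Real.exp t := Real.exp_pos _
        nlinarith [mul_le_mul_of_nonneg_left h3 ht.1.le]
      have hu' : u ≤ B := (le_abs_self u).trans hu
      have := mono (Set.mem_Icc.2 ⟨le_refl 0, hB0⟩) (Set.mem_Icc.2 ⟨h0, hu'⟩) h0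
      linarith [hg0 ▸ this]
    · have anti : AntitoneOn g (Set.Icc (-B) 0) := by
        apply antitoneOn_of_deriv_nonpos (convex_Icc (-B) 0) hcont.continuousOn
          hdiff.differentiableOn
        intro t ht
        rw [interior_Icc] at ht
        rw [hderiv]
        have h1 := Real.add_one_le_exp (-t)
        have h6 : Real.exp (-B) ≤ 1 := Real.exp_le_one_iff.2 (by linarith)
        nlinarith [ht.2, mul_le_mul_of_nonneg_left h6 (neg_nonneg.2 ht.2.le)]
      have hu' : -B ≤ u := neg_le_of_abs_le hu
      have := anti (Set.mem_Icc.2 ⟨hu', h0.le⟩) (Set.mem_Icc.2 ⟨neg_nonpos_of_nonneg hB0, le_refl 0⟩) h0.le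
      linarith [hg0 ▸ this]
  simp only [hg] at suff
  linarith

/-- Lemma A.1, lower bound: for strictly positive integrable intensities `f, h` with
`‖log(f/h)‖_∞ ≤ B`, the Kullback–Leibler distance
`Δ(f; h) = ∫ (f log(f/h) − f + h) dμ` satisfies
`Δ(f; h) ≥ (1/2)·e^{−B}·∫ f·(log(f/h))² dμ`. -/
theorem kl_lower_bound {E : Type*} [MeasurableSpace E] (μ : Measure E)
    (f h : E → ℝ) (hfm : Measurable f) (hhm : Measurable h)
    (hfpos : ∀ x, 0 < f x) (hhpos : ∀ x, 0 < h x)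
    (hfint : Integrable f μ) (hhint : Integrable h μ)
    (B : ℝ) (hB : ∀ᵐ x ∂μ, |Real.log (f x / h x)| ≤ B) :
    (1 / 2) * Real.exp (-B) * ∫ x, f x * (Real.log (f x / h x)) ^ 2 ∂μ ≤
      ∫ x, (f x * Real.log (f x / h x) - f x + h x) ∂μ := by
  set u : E → ℝ := fun x => Real.log (f x / h x) with hu
  have hum : Measurable u := (hfm.div hhm).log
  have int1 : Integrable (fun x => u x * f x) μ :=
    hfint.bdd_mul hum.aestronglyMeasurable (by filter_upwards [hB] with x hx; simpa using hx)
  have int1' : Integrable (fun x => f x * u x) μ := by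
    simpa [mul_comm] using int1
  have int2 : Integrable (fun x => f x * u x ^ 2) μ := by
    refine Integrable.mono' (hfint.const_mul (B^2)) (hfm.mul (hum.pow_const 2)).aestronglyMeasurable ?_
    filter_upwards [hB] with x hx
    have h1 : u x ^ 2 ≤ B ^ 2 := by
      have := sq_abs (u x) ▸ pow_le_pow_left₀ (abs_nonneg _) hx 2
      simpa [sq_abs] using this
    have := (hfpos x).le
    rw [Real.norm_eq_abs, abs_of_nonneg (by positivity)]
    nlinarith
  have intR : Integrable (fun x => f x * u x - f x + h x) μ := (int1'.sub hfint).add hhint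
  rw [← integral_const_mul]
  refine integral_mono_ae (int2.const_mul _) intR ?_
  filter_upwards [hB] with x hx
  have hfh : (0:ℝ) < f x / h x := div_pos (hfpos x) (hhpos x)
  have hexp : Real.exp (-(u x)) = h x / f x := by
    rw [hu, Real.exp_neg, Real.exp_log hfh]
    field_simp
  have hhx : h x = f x * Real.exp (-(u x)) := by
    rw [hexp, mul_div_cancel₀ _ (hfpos x).ne']
  have key := key_ineq hx
  have := mul_le_mul_of_nonneg_left key (hfpos x).le
  calc (1/2) * Real.exp (-B) * (f x * u x ^ 2)
      = f x * ((1/2) * Real.exp (-B) * u x ^ 2) := by ring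
    _ ≤ f x * (Real.exp (-(u x)) - 1 + u x) := this
    _ = f x * u x - f x + h x := by rw [hhx]; ring
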